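/- Let F satisfy conditions (Ha) and (Hb), and define 1/m(x) = ∫ₓ^∞ H(t)/A²(t) dt and ℓ(x) = ∫₀ˣ H(t) dt. Then m(x) ≤ A(x) ≤ ℓ(x) for all sufficiently large x. -/

import Mathlib

open MeasureTheory Filter Set Asymptotics Topology

/-- Tail of a distribution: `1 - F(x) = P[X > x]`. -/
noncomputable def tailF (μ : Measure ℝ) (x : ℝ) : ℝ := (μ (Set.Ioi x)).toReal

/-- A function is slowly varying at infinity. -/
def SlowlyVarying (f : ℝ → ℝ) : Prop :=
  (∀ᶠ x in atTop, 0 < f x) ∧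
    ∀ c : ℝ, 1 < c → Tendsto (fun x => f (c * x) / f x) atTop (𝓝 1)

/-- Two-sided tail `H(x) = P[|X| > x] = 1 - F(x) + F(-x-0)`. -/
noncomputable def Hf (μ : Measure ℝ) (x : ℝ) : ℝ := (μ {y : ℝ | x < |y|}).toReal

/-- `K(x) = P[X > x] - P[X < -x] = 1 - F(x) - F(-x-0)`. -/
noncomputable def Kf (μ : Measure ℝ) (x : ℝ) : ℝ :=
  (μ (Set.Ioi x)).toReal - (μ (Set.Iio (-x))).toReal

/-- `A(x) = ∫₀ˣ K(t) dt`. -/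
noncomputable def Af (μ : Measure ℝ) (x : ℝ) : ℝ := ∫ t in (0:ℝ)..x, Kf μ t

/-- `ℓ(x) = ∫₀ˣ H(t) dt`. -/
noncomputable def ellH (μ : Measure ℝ) (x : ℝ) : ℝ := ∫ t in (0:ℝ)..x, Hf μ t

/-- `m(x)`, defined by `1/m(x) = ∫ₓ^∞ H(t)/A²(t) dt`. -/
noncomputable def mF (μ : Measure ℝ) (x : ℝ) : ℝ :=
  (∫ t in Set.Ioi x, Hf μ t / (Af μ t) ^ 2)⁻¹

/-- `r₊(x) = ∫ₓ^∞ (1-F(t))/A²(t) dt`. -/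
noncomputable def rPlus (μ : Measure ℝ) (x : ℝ) : ℝ :=
  ∫ t in Set.Ioi x, tailF μ t / (Af μ t) ^ 2

/-- `r₋(x) = ∫ₓ^∞ F(-t)/A²(t) dt`. -/
noncomputable def rMinus (μ : Measure ℝ) (x : ℝ) : ℝ :=
  ∫ t in Set.Ioi x, (μ (Set.Iio (-t))).toReal / (Af μ t) ^ 2

/-- Condition (Ha): `A(x)/(x H(x)) → ∞`, i.e. positive relative stability. -/
def HaCond (μ : Measure ℝ) : Prop :=
  Tendsto (fun x => Af μ x / (x * Hf μ x)) atTop atTop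

/-- Condition (Hb): `∫_{x₀}^∞ H(x)/A²(x) dx < ∞` for some `x₀ > 0`
with `A` positive on `[x₀, ∞)`. -/
def HbCond (μ : Measure ℝ) : Prop :=
  ∃ x₀ : ℝ, 0 < x₀ ∧ (∀ x ≥ x₀, 0 < Af μ x) ∧
    IntegrableOn (fun x => Hf μ x / (Af μ x) ^ 2) (Set.Ioi x₀)

/-- `X` is arithmetic: `X/h ∈ ℤ` almost surely for some `h > 0`. -/
def IsArith (μ : Measure ℝ) : Prop :=
  ∃ h : ℝ, 0 < h ∧ μ {x : ℝ | ∃ n : ℤ, x = n * h} = 1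

/-- Characteristic function `φ(θ) = E[e^{iθX}]`. -/
noncomputable def charF (μ : Measure ℝ) (θ : ℝ) : ℂ :=
  ∫ x, Complex.exp (Complex.I * θ * x) ∂μ

section Aux
variable (μ : Measure ℝ) [IsProbabilityMeasure μ]

lemma Hf_nonneg (t : ℝ) : 0 ≤ Hf μ t := ENNReal.toReal_nonneg

lemma Hf_anti : Antitone (Hf μ) := by
  intro s t hst
  exact ENNReal.toReal_mono (measure_ne_top μ _)
    (measure_mono fun y hy => lt_of_le_of_lt hst hy)

lemma Hf_intInt (a b : ℝ) : IntervalIntegrable (Hf μ) volume a b :=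
  (Hf_anti μ).intervalIntegrable

lemma tail_anti : Antitone (fun t : ℝ => (μ (Set.Ioi t)).toReal) := by
  intro s t hst
  exact ENNReal.toReal_mono (measure_ne_top μ _)
    (measure_mono (Ioi_subset_Ioi hst))

lemma low_anti : Antitone (fun t : ℝ => (μ (Set.Iio (-t))).toReal) := by
  intro s t hst
  exact ENNReal.toReal_mono (measure_ne_top μ _)
    (measure_mono (Iio_subset_Iio (by linarith)))

lemma Kf_intInt (a b : ℝ) : IntervalIntegrable (Kf μ) volume a b := by
  have : Kf μ = fun t => (μ (Set.Ioi t)).toReal - (μ (Set.Iio (-t))).toReal := rfl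
  rw [this]
  exact ((tail_anti μ).intervalIntegrable).sub ((low_anti μ).intervalIntegrable)

lemma Hf_eq_add {t : ℝ} (ht : 0 ≤ t) :
    Hf μ t = (μ (Set.Ioi t)).toReal + (μ (Set.Iio (-t))).toReal := by
  have hset : {y : ℝ | t < |y|} = Set.Ioi t ∪ Set.Iio (-t) := by
    ext y
    simp only [Set.mem_setOf_eq, Set.mem_union, Set.mem_Ioi, Set.mem_Iio, lt_abs]
    constructor
    · rintro (h | h); · exact Or.inl h
      · exact Or.inr (by linarith)
    · rintro (h | h); · exact Or.inl h
      · exact Or.inr (by linarith)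
  have hdisj : Disjoint (Set.Ioi t) (Set.Iio (-t)) := by
    rw [Set.disjoint_left]
    intro y hy1 hy2
    simp only [Set.mem_Ioi] at hy1
    simp only [Set.mem_Iio] at hy2
    linarith
  rw [Hf, hset, measure_union hdisj measurableSet_Iio,
    ENNReal.toReal_add (measure_ne_top μ _) (measure_ne_top μ _)]

lemma Kf_le_Hf {t : ℝ} (ht : 0 ≤ t) : Kf μ t ≤ Hf μ t := by
  rw [Kf, Hf_eq_add μ ht]
  have : (0:ℝ) ≤ (μ (Set.Iio (-t))).toReal := ENNReal.toReal_nonneg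
  linarith

lemma ellH_mono : Monotone (ellH μ) := by
  intro a b hab
  have h := intervalIntegral.integral_add_adjacent_intervals
    (Hf_intInt μ 0 a) (Hf_intInt μ a b)
  have h2 : 0 ≤ ∫ t in a..b, Hf μ t :=
    intervalIntegral.integral_nonneg hab fun t _ => Hf_nonneg μ t
  simp only [ellH]
  linarith [h]

lemma Af_le_of_le {a b : ℝ} (ha : 0 ≤ a) (hab : a ≤ b) :
    Af μ b ≤ Af μ a + (ellH μ b - ellH μ a) := by
  have hK := intervalIntegral.integral_add_adjacent_intervals
    (Kf_intInt μ 0 a) (Kf_intInt μ a b)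
  have hH := intervalIntegral.integral_add_adjacent_intervals
    (Hf_intInt μ 0 a) (Hf_intInt μ a b)
  have hmono : (∫ t in a..b, Kf μ t) ≤ ∫ t in a..b, Hf μ t := by
    apply intervalIntegral.integral_mono_on hab (Kf_intInt μ a b) (Hf_intInt μ a b)
    intro t ht
    exact Kf_le_Hf μ (le_trans ha ht.1)
  simp only [Af, ellH] at *
  linarith

lemma Hf_rightCont (t : ℝ) : ContinuousWithinAt (Hf μ) (Set.Ioi t) t := by
  have h1 : Tendsto (Hf μ) (𝓝[>] t) (𝓝 (sSup (Hf μ '' Set.Ioi t))) :=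
    (Hf_anti μ).tendsto_nhdsGT t
  have hmem : ∀ n : ℕ, t + 1 / (n + 1) ∈ Set.Ioi t := by
    intro n
    simp only [Set.mem_Ioi]
    have : (0:ℝ) < 1 / (n + 1) := by positivity
    linarith
  have hbdd : BddAbove (Hf μ '' Set.Ioi t) := by
    refine ⟨Hf μ t, ?_⟩
    rintro y ⟨s, hs, rfl⟩
    exact Hf_anti μ (le_of_lt hs)
  have hub : sSup (Hf μ '' Set.Ioi t) ≤ Hf μ t := by
    apply csSup_le (Set.Nonempty.image _ ⟨t + 1, by simp⟩)
    rintro y ⟨s, hs, rfl⟩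
    exact Hf_anti μ (le_of_lt hs)
  have htend : Tendsto (fun n : ℕ => Hf μ (t + 1 / (n + 1))) atTop (𝓝 (Hf μ t)) := by
    have hmono : Monotone (fun n : ℕ => {y : ℝ | t + 1 / (n + 1) < |y|}) := by
      intro m n hmn
      intro y hy
      simp only [Set.mem_setOf_eq] at hy ⊢
      have h1 : 1 / ((n:ℝ) + 1) ≤ 1 / ((m:ℝ) + 1) := by
        apply one_div_le_one_div_of_le (by positivity)
        exact_mod_cast add_le_add_left (Nat.cast_le.2 hmn) 1
      linarith
    have hU : (⋃ n : ℕ, {y : ℝ | t + 1 / (n + 1) < |y|}) = {y : ℝ | t < |y|} := by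
      ext y
      simp only [Set.mem_iUnion, Set.mem_setOf_eq]
      constructor
      · rintro ⟨n, hn⟩
        have : (0:ℝ) < 1 / (n + 1) := by positivity
        linarith
      · intro hy
        obtain ⟨n, hn⟩ := exists_nat_one_div_lt (sub_pos.2 hy)
        exact ⟨n, by linarith⟩
    have := tendsto_measure_iUnion_atTop (μ := μ) hmono
    rw [hU] at this
    have h2 := (ENNReal.tendsto_toReal (measure_ne_top μ _)).comp this
    exact h2
  have hle : Hf μ t ≤ sSup (Hf μ '' Set.Ioi t) := by
    apply le_of_tendsto' htend
    intro n
    exact le_csSup hbdd ⟨t + 1 / (n + 1), hmem n, rfl⟩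
  have : sSup (Hf μ '' Set.Ioi t) = Hf μ t := le_antisymm hub hle
  rwa [this] at h1

lemma ellH_tendsto (hmean : ∫⁻ x, ENNReal.ofReal |x| ∂μ = ⊤) :
    Tendsto (ellH μ) atTop atTop := by
  apply tendsto_atTop_atTop_of_monotone (ellH_mono μ)
  by_contra h
  push_neg at h
  obtain ⟨C, hC⟩ := h
  have hint : IntegrableOn (Hf μ) (Set.Ioi 0) := by
    apply integrableOn_Ioi_of_intervalIntegral_norm_bounded C 0
      (b := fun n : ℕ => (n:ℝ)) (l := atTop)
      (fun n => ((Hf_intInt μ 0 n).1))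
      tendsto_natCast_atTop_atTop
    filter_upwards with n
    have heq : (∫ x in (0:ℝ)..(n:ℝ), ‖Hf μ x‖) = ellH μ n := by
      rw [ellH]
      congr 1
      ext x
      exact Real.norm_of_nonneg (Hf_nonneg μ x)
    rw [heq]
    exact le_of_lt (hC n)
  have hlayer := lintegral_eq_lintegral_meas_lt μ
    (f := fun x : ℝ => |x|) (Eventually.of_forall fun x => abs_nonneg x)
    (measurable_id.abs).aemeasurable
  rw [hmean] at hlayer
  have heq2 : ∫⁻ t in Set.Ioi 0, μ {a : ℝ | t < |a|} =
      ∫⁻ t in Set.Ioi 0, ENNReal.ofReal (Hf μ t) := by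
    apply lintegral_congr
    intro t
    rw [Hf, ENNReal.ofReal_toReal (measure_ne_top μ _)]
  have hfin : (∫⁻ t in Set.Ioi 0, ENNReal.ofReal (Hf μ t)) ≠ ⊤ := by
    rw [← ofReal_integral_eq_lintegral_ofReal hint
      (Eventually.of_forall fun t => Hf_nonneg μ t)]
    exact ENNReal.ofReal_ne_top
  rw [heq2] at hlayer
  exact hfin hlayer.symm

end Aux

lemma inv_le_integral (μ : Measure ℝ) [IsProbabilityMeasure μ]
    (hmean : ∫⁻ x, ENNReal.ofReal |x| ∂μ = ⊤)
    {x₀ x : ℝ} (hx₀ : 0 < x₀) (hApos : ∀ y ≥ x₀, 0 < Af μ y)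
    (hHbInt : IntegrableOn (fun t => Hf μ t / (Af μ t) ^ 2) (Set.Ioi x₀))
    (hx : x₀ ≤ x) :
    (Af μ x)⁻¹ ≤ ∫ t in Set.Ioi x, Hf μ t / (Af μ t) ^ 2 := by
  set c := Af μ x with hc
  have hcpos : 0 < c := hApos x hx
  have hxpos : 0 < x := lt_of_lt_of_le hx₀ hx
  set B : ℝ → ℝ := fun t => c - ellH μ x + ellH μ t with hB
  have hBx : B x = c := by simp [hB]
  have hBmono : Monotone B := by
    intro a b hab
    simp only [hB, add_le_add_iff_left]
    exact ellH_mono μ hab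
  have hBpos : ∀ t, x ≤ t → 0 < B t := by
    intro t ht
    have h1 : B x ≤ B t := hBmono ht
    rw [hBx] at h1
    linarith
  have hAB : ∀ t, x ≤ t → Af μ t ≤ B t := by
    intro t ht
    have h1 := Af_le_of_le μ (le_of_lt hxpos) ht
    simp only [hB]
    rw [hc]
    linarith
  have hellcont : Continuous (ellH μ) :=
    intervalIntegral.continuous_primitive (fun a b => Hf_intInt μ a b) 0
  have hBcont : Continuous B := by
    simp only [hB]
    exact continuous_const.add hellcont
  have hIntA : IntegrableOn (fun t => Hf μ t / (Af μ t) ^ 2) (Set.Ioi x) :=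
    hHbInt.mono_set (Set.Ioi_subset_Ioi hx)
  have hkey : ∀ b, x ≤ b →
      c⁻¹ - (B b)⁻¹ ≤ ∫ t in Set.Ioi x, Hf μ t / (Af μ t) ^ 2 := by
    intro b hb
    have hgcont : ContinuousOn (fun t => -(B t)⁻¹) (Set.Icc x b) := by
      apply ContinuousOn.neg
      exact ContinuousOn.inv₀ hBcont.continuousOn
        (fun t ht => ne_of_gt (hBpos t ht.1))
    have hderiv : ∀ t ∈ Set.Ioo x b,
        HasDerivWithinAt (fun t => -(B t)⁻¹) (Hf μ t / (B t) ^ 2) (Set.Ioi t) t := by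
      intro t ht
      have hl : HasDerivWithinAt (ellH μ) (Hf μ t) (Set.Ici t) t :=
        intervalIntegral.integral_hasDerivWithinAt_right (Hf_intInt μ 0 t)
          ((Hf_anti μ).measurable.stronglyMeasurable.stronglyMeasurableAtFilter)
          (Hf_rightCont μ t)
      have hBd : HasDerivWithinAt B (Hf μ t) (Set.Ici t) t := hl.const_add (c - ellH μ x)
      have h2 := (hBd.inv (ne_of_gt (hBpos t (le_of_lt ht.1)))).neg
      have h3 := h2.mono Set.Ioi_subset_Ici_self
      rw [neg_div, neg_neg] at h3
      exact h3
    have hintB : IntervalIntegrable (fun t => Hf μ t / (B t) ^ 2) volume x b := by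
      have h1 : ContinuousOn (fun t => ((B t) ^ 2)⁻¹) (Set.uIcc x b) := by
        apply ContinuousOn.inv₀ ((hBcont.pow 2).continuousOn)
        intro t ht
        rw [Set.uIcc_of_le hb] at ht
        have := hBpos t ht.1
        exact pow_ne_zero 2 (ne_of_gt this)
      have h2 := (Hf_intInt μ x b).mul_continuousOn h1
      simpa [div_eq_mul_inv] using h2
    have hFTC := intervalIntegral.integral_eq_sub_of_hasDeriv_right_of_le hb hgcont
      hderiv hintB
    have hintA' : IntervalIntegrable (fun t => Hf μ t / (Af μ t) ^ 2) volume x b := by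
      rw [intervalIntegrable_iff_integrableOn_Ioc_of_le hb]
      exact hHbInt.mono_set (fun t ht => lt_of_le_of_lt hx ht.1)
    have hmono : (∫ t in x..b, Hf μ t / (B t) ^ 2) ≤
        ∫ t in x..b, Hf μ t / (Af μ t) ^ 2 := by
      apply intervalIntegral.integral_mono_on hb hintB hintA'
      intro t ht
      have hApt : 0 < Af μ t := hApos t (le_trans hx ht.1)
      have hle : (Af μ t) ^ 2 ≤ (B t) ^ 2 := by nlinarith [hAB t ht.1]
      gcongr
      exact Hf_nonneg μ t
    have htail : (∫ t in x..b, Hf μ t / (Af μ t) ^ 2) ≤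
        ∫ t in Set.Ioi x, Hf μ t / (Af μ t) ^ 2 := by
      rw [intervalIntegral.integral_of_le hb]
      apply setIntegral_mono_set hIntA
        (Eventually.of_forall fun t => div_nonneg (Hf_nonneg μ t) (sq_nonneg _))
        (HasSubset.Subset.eventuallyLE Set.Ioc_subset_Ioi_self)
    rw [hFTC] at hmono
    rw [hBx] at hmono
    linarith
  have hBtend : Tendsto B atTop atTop := by
    simp only [hB]
    exact tendsto_atTop_add_const_left atTop _ (ellH_tendsto μ hmean)
  have htend : Tendsto (fun b => c⁻¹ - (B b)⁻¹) atTop (𝓝 (c⁻¹ - 0)) :=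
    tendsto_const_nhds.sub hBtend.inv_tendsto_atTop
  rw [sub_zero] at htend
  exact le_of_tendsto htend (by
    filter_upwards [eventually_ge_atTop x] with b hb
    exact hkey b hb)

theorem stmt10' (μ : Measure ℝ) [IsProbabilityMeasure μ]
    (hmean : ∫⁻ x, ENNReal.ofReal |x| ∂μ = ⊤)
    (hHb : ∃ x₀ : ℝ, 0 < x₀ ∧ (∀ x ≥ x₀, 0 < Af μ x) ∧
      IntegrableOn (fun x => Hf μ x / (Af μ x) ^ 2) (Set.Ioi x₀)) :
    ∀ᶠ x in atTop, (∫ t in Set.Ioi x, Hf μ t / (Af μ t) ^ 2)⁻¹ ≤ Af μ x ∧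
      Af μ x ≤ ellH μ x := by
  obtain ⟨x₀, hx₀, hApos, hHbInt⟩ := hHb
  filter_upwards [eventually_ge_atTop x₀] with x hx
  have hxpos : 0 < x := lt_of_lt_of_le hx₀ hx
  constructor
  · have hI := inv_le_integral μ hmean hx₀ hApos hHbInt hx
    have hcpos : 0 < Af μ x := hApos x hx
    exact inv_le_of_inv_le₀ hcpos hI
  · apply intervalIntegral.integral_mono_on (le_of_lt hxpos) (Kf_intInt μ 0 x)
      (Hf_intInt μ 0 x)
    intro t ht
    exact Kf_le_Hf μ ht.1

/-- Under (Ha) and (Hb), `m(x) ≤ A(x) ≤ ℓ(x)` for all sufficiently large `x`. -/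
theorem stmt10 (μ : Measure ℝ) [IsProbabilityMeasure μ]
    (hmean : ∫⁻ x, ENNReal.ofReal |x| ∂μ = ⊤)
    (hHa : HaCond μ) (hHb : HbCond μ) :
    ∀ᶠ x in atTop, mF μ x ≤ Af μ x ∧ Af μ x ≤ ellH μ x := by
  obtain ⟨x₀, hx₀, hApos, hHbInt⟩ := hHb
  have h := stmt10' μ hmean ⟨x₀, hx₀, hApos, hHbInt⟩
  filter_upwards [h] with x hx
  exact ⟨by rw [mF]; exact hx.1, hx.2⟩
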